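/- Let q(d) = (2/3)·∑_{k=0}^{d−2} binom(d−1+k, k)·(1/3)^{d−1+k} + binom(2d−2, d−1)·(1/3)^{2d−1} for integers d ≥ 1 (with the first sum empty when d = 1). Then the series ∑_{d=1}^∞ d·q(d) converges and equals 2 + √5/5. -/

import Mathlib

/-- `q d` is the probability that the vertical distance between two consecutive
particles deposited at the center site equals `d` (for `d ≥ 1`), in the
three-site multilayer parking model with screening. -/
noncomputable def parkingGap (d : ℕ) : ℝ :=
  (2/3) * ∑ k ∈ Finset.range (d - 1), ((d - 1 + k).choose k : ℝ) * (1/3) ^ (d - 1 + k)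
    + ((2 * d - 2).choose (d - 1) : ℝ) * (1/3) ^ (2 * d - 1)

open Finset



private lemma central_le_four_pow (n : ℕ) : (2*n).choose n ≤ 4^n :=
  le_trans (Nat.choose_le_choose n (by omega)) (Nat.choose_middle_le_pow n)

private lemma summable_catR : Summable (fun n => (catalan n : ℝ) * (1/9)^n) := by
  refine Summable.of_nonneg_of_le (fun n => by positivity) (fun n => ?_)
    (summable_geometric_of_lt_one (r := 4/9) (by norm_num) (by norm_num))
  have h1 : (catalan n : ℝ) ≤ (4:ℝ)^n := by
    have : catalan n ≤ 4^n := by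
      calc catalan n ≤ n.centralBinom := by
            rw [catalan_eq_centralBinom_div]; exact Nat.div_le_self _ _
        _ ≤ 4^n := by rw [Nat.centralBinom_eq_two_mul_choose]; exact central_le_four_pow n
    exact_mod_cast this
  calc (catalan n : ℝ) * (1/9)^n ≤ (4:ℝ)^n * (1/9)^n :=
        mul_le_mul_of_nonneg_right h1 (by positivity)
    _ = (4/9:ℝ)^n := by rw [← mul_pow]; norm_num

private lemma catalan_succ_range (n : ℕ) :
    catalan (n+1) = ∑ k ∈ range (n+1), catalan k * catalan (n-k) := by
  rw [catalan_succ', Finset.Nat.sum_antidiagonal_eq_sum_range_succ_mk]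

private lemma hasSum_catR :
    HasSum (fun n => (catalan n : ℝ) * (1/9)^n) ((9 - 3*Real.sqrt 5)/2) := by
  set f : ℕ → ℝ := fun n => (catalan n : ℝ) * (1/9)^n with hf
  have hsum := summable_catR
  set S : ℝ := ∑' n, f n with hSdef
  have hS : HasSum f S := hsum.hasSum
  have hnorm : Summable fun n => ‖f n‖ := by
    apply hsum.abs.congr
    intro n
    rw [Real.norm_eq_abs]
  have hC : HasSum (fun n => ∑ k ∈ range (n+1), f k * f (n-k)) (S * S) :=
    hasSum_sum_range_mul_of_summable_norm hnorm hnorm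
  have key : ∀ n, ∑ k ∈ range (n+1), f k * f (n-k) = (catalan (n+1) : ℝ) * (1/9)^n := by
    intro n
    have : ∀ k ∈ range (n+1), f k * f (n-k) = ((catalan k * catalan (n-k) : ℕ) : ℝ) * (1/9)^n := by
      intro k hk
      rw [mem_range, Nat.lt_succ_iff] at hk
      push_cast [hf]
      rw [mul_mul_mul_comm, ← pow_add, Nat.add_sub_cancel' hk]
    rw [sum_congr rfl this, ← sum_mul, ← Nat.cast_sum, ← catalan_succ_range]
  simp only [key] at hC
  -- shifted series
  have hshift : HasSum (fun n => f (n+1)) (S - 1) := by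
    have := (hasSum_nat_add_iff' (f := f) (g := S) 1).2 hS
    simpa [hf] using this
  have hshift9 : HasSum (fun n => (catalan (n+1) : ℝ) * (1/9)^n) (9 * (S - 1)) := by
    have h2 : (fun n => (catalan (n+1):ℝ) * (1/9)^n) = fun n => 9 * f (n+1) := by
      funext n; simp only [hf, pow_succ]; ring
    rw [h2]; exact hshift.mul_left 9
  have hquad : S * S = 9 * (S - 1) := hC.unique hshift9
  have hSle : S ≤ 9/5 := by
    have hg : Summable (fun n => (4/9:ℝ)^n) :=
      summable_geometric_of_lt_one (by norm_num) (by norm_num)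
    have h2 : S ≤ ∑' n, (4/9:ℝ)^n := by
      apply Summable.tsum_le_tsum _ hsum hg
      intro n
      have h1 : (catalan n : ℝ) ≤ (4:ℝ)^n := by
        have : catalan n ≤ 4^n := by
          calc catalan n ≤ n.centralBinom := by
                rw [catalan_eq_centralBinom_div]; exact Nat.div_le_self _ _
            _ ≤ 4^n := by rw [Nat.centralBinom_eq_two_mul_choose]; exact central_le_four_pow n
        exact_mod_cast this
      calc f n ≤ (4:ℝ)^n * (1/9)^n := mul_le_mul_of_nonneg_right h1 (by positivity)
        _ = (4/9:ℝ)^n := by rw [← mul_pow]; norm_num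
    rw [tsum_geometric_of_lt_one (by norm_num) (by norm_num)] at h2
    norm_num at h2
    linarith
  have hs5 : Real.sqrt 5 ^ 2 = 5 := Real.sq_sqrt (by norm_num)
  have hs5nn : (0:ℝ) ≤ Real.sqrt 5 := Real.sqrt_nonneg 5
  have hfac : (9 - 2*S - 3*Real.sqrt 5) * (9 - 2*S + 3*Real.sqrt 5) = 0 := by nlinarith
  have : S = (9 - 3*Real.sqrt 5)/2 := by
    rcases mul_eq_zero.1 hfac with h | h
    · linarith
    · nlinarith
  rwa [this] at hS



private lemma central_succ_nat (n : ℕ) :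
    (2*(n+1)).choose (n+1) + 2 * catalan n = 4 * ((2*n).choose n) := by
  have h1 := Nat.succ_mul_centralBinom_succ n
  have h2 := succ_mul_catalan_eq_centralBinom n
  rw [Nat.centralBinom_eq_two_mul_choose, Nat.centralBinom_eq_two_mul_choose] at h1
  rw [Nat.centralBinom_eq_two_mul_choose] at h2
  refine Nat.eq_of_mul_eq_mul_left (show 0 < n+1 by omega) ?_
  calc (n+1) * ((2*(n+1)).choose (n+1) + 2 * catalan n)
      = (n+1) * (2*(n+1)).choose (n+1) + 2 * ((n+1) * catalan n) := by ring
    _ = 2 * (2*n+1) * ((2*n).choose n) + 2 * ((2*n).choose n) := by rw [h1, h2]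
    _ = (n+1) * (4 * ((2*n).choose n)) := by ring

private lemma central_le_four_pow_real (n : ℕ) : (((2*n).choose n : ℕ) : ℝ) * (1/9)^n ≤ (4/9:ℝ)^n := by
  have h1 : (((2*n).choose n : ℕ) : ℝ) ≤ (4:ℝ)^n := by exact_mod_cast central_le_four_pow n
  calc (((2*n).choose n : ℕ) : ℝ) * (1/9)^n ≤ (4:ℝ)^n * (1/9)^n :=
        mul_le_mul_of_nonneg_right h1 (by positivity)
    _ = (4/9:ℝ)^n := by rw [← mul_pow]; norm_num

private lemma summable_cbR : Summable (fun n => (((2*n).choose n : ℕ) : ℝ) * (1/9)^n) :=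
  Summable.of_nonneg_of_le (fun n => by positivity) central_le_four_pow_real
    (summable_geometric_of_lt_one (by norm_num) (by norm_num))

private lemma hasSum_cbR :
    HasSum (fun n => (((2*n).choose n : ℕ) : ℝ) * (1/9)^n) (3*Real.sqrt 5/5) := by
  set b : ℕ → ℝ := fun n => (((2*n).choose n : ℕ) : ℝ) * (1/9)^n with hb
  have hsum := summable_cbR
  set B : ℝ := ∑' n, b n with hBdef
  have hB : HasSum b B := hsum.hasSum
  have hshift : HasSum (fun n => b (n+1)) (B - 1) := by
    have := (hasSum_nat_add_iff' (f := b) (g := B) 1).2 hB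
    simpa [hb] using this
  have hrel : ∀ n, b (n+1) = (4/9) * b n - (2/9) * ((catalan n : ℝ) * (1/9)^n) := by
    intro n
    have h := central_succ_nat n
    have hc : (((2*(n+1)).choose (n+1) : ℕ) : ℝ) = 4*(((2*n).choose n : ℕ):ℝ) - 2*(catalan n : ℝ) := by
      have := congrArg (fun m : ℕ => (m : ℝ)) h
      push_cast at this
      linarith
    simp only [hb, hc, pow_succ]
    ring
  have halt : HasSum (fun n => (4/9) * b n - (2/9) * ((catalan n : ℝ) * (1/9)^n))
      ((4/9) * B - (2/9) * ((9 - 3*Real.sqrt 5)/2)) :=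
    (hB.mul_left (4/9)).sub (hasSum_catR.mul_left (2/9))
  have heq : B - 1 = (4/9) * B - (2/9) * ((9 - 3*Real.sqrt 5)/2) := by
    have h2 : HasSum (fun n => b (n+1)) ((4/9) * B - (2/9) * ((9 - 3*Real.sqrt 5)/2)) := by
      have hfe : (fun n => b (n+1)) = fun n => (4/9) * b n - (2/9) * ((catalan n : ℝ) * (1/9)^n) :=
        funext hrel
      rw [hfe]; exact halt
    exact hshift.unique h2
  have : B = 3*Real.sqrt 5/5 := by linarith
  rwa [this] at hB

private lemma summable_dR : Summable (fun n : ℕ => (n : ℝ) * (((2*n).choose n : ℕ) : ℝ) * (1/9)^n) := by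
  have hg : Summable (fun n : ℕ => (n:ℝ)^1 * (4/9)^n) :=
    summable_pow_mul_geometric_of_norm_lt_one 1 (by rw [Real.norm_eq_abs, abs_of_nonneg (by norm_num : (0:ℝ) ≤ 4/9)]; norm_num)
  refine Summable.of_nonneg_of_le (fun n => by positivity) (fun n => ?_) hg
  rw [pow_one, mul_assoc]
  exact mul_le_mul_of_nonneg_left (central_le_four_pow_real n) (by positivity)

private lemma hasSum_dR :
    HasSum (fun n : ℕ => (n : ℝ) * (((2*n).choose n : ℕ) : ℝ) * (1/9)^n) (6*Real.sqrt 5/25) := by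
  set d : ℕ → ℝ := fun n : ℕ => (n : ℝ) * (((2*n).choose n : ℕ) : ℝ) * (1/9)^n with hd
  have hsum := summable_dR
  set D : ℝ := ∑' n, d n with hDdef
  have hD : HasSum d D := hsum.hasSum
  have hshift : HasSum (fun n => d (n+1)) (D - 0) := by
    have := (hasSum_nat_add_iff' (f := d) (g := D) 1).2 hD
    simpa [hd] using this
  have hrel : ∀ n, d (n+1) = (4/9) * d n + (2/9) * ((((2*n).choose n : ℕ) : ℝ) * (1/9)^n) := by
    intro n
    have h := Nat.succ_mul_centralBinom_succ n
    rw [Nat.centralBinom_eq_two_mul_choose, Nat.centralBinom_eq_two_mul_choose] at h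
    have hc : ((n:ℝ)+1) * (((2*(n+1)).choose (n+1) : ℕ) : ℝ)
        = (2*(2*(n:ℝ)+1)) * (((2*n).choose n : ℕ):ℝ) := by exact_mod_cast h
    simp only [hd, pow_succ]
    push_cast
    linear_combination ((1/9:ℝ)^n * (1/9)) * hc
  have halt : HasSum (fun n => (4/9) * d n + (2/9) * ((((2*n).choose n : ℕ) : ℝ) * (1/9)^n))
      ((4/9) * D + (2/9) * (3*Real.sqrt 5/5)) :=
    (hD.mul_left (4/9)).add (hasSum_cbR.mul_left (2/9))
  have heq : D - 0 = (4/9) * D + (2/9) * (3*Real.sqrt 5/5) := by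
    have hfe : (fun n => d (n+1)) = fun n => (4/9) * d n + (2/9) * ((((2*n).choose n : ℕ) : ℝ) * (1/9)^n) :=
      funext hrel
    rw [hfe] at hshift
    exact hshift.unique halt
  have : D = 6*Real.sqrt 5/25 := by linarith
  rwa [this] at hD



/-- telescoping identity -/
private lemma tel (M : ℕ) : ∀ t, t ≤ M →
    ∑ k ∈ range (t+1), (((M:ℝ)+1) - 2*k) * (((M+1).choose k : ℕ) : ℝ)
      = ((M:ℝ)+1) * ((M.choose t : ℕ) : ℝ) := by
  intro t
  induction t with
  | zero => intro _; simp
  | succ t ih =>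
    intro ht
    have ht' : t ≤ M := by omega
    rw [sum_range_succ, ih ht']
    have h1 : ((M:ℝ)+1) * ((M.choose t : ℕ) : ℝ)
        = (((M+1).choose (t+1) : ℕ) : ℝ) * ((t:ℝ)+1) := by
      exact_mod_cast congrArg (fun m : ℕ => (m:ℝ)) (Nat.add_one_mul_choose_eq M t)
    have h2 : ((M.choose (t+1) : ℕ) : ℝ) * ((M:ℝ)+1)
        = (((M+1).choose (t+1) : ℕ) : ℝ) * ((M:ℝ) - t) := by
      have := Nat.choose_mul_succ_eq M (t+1)
      have hcast := congrArg (fun m : ℕ => (m:ℝ)) this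
      push_cast [Nat.cast_sub (show t+1 ≤ M+1 by omega)] at hcast
      rw [Nat.cast_sub ht'] at hcast
      linarith
    push_cast at h1 h2 ⊢
    nlinarith [h1, h2]

/-- the closed form for antidiagonal fiber sums -/
private noncomputable def vfun (m : ℕ) : ℝ :=
  (m:ℝ) * (((m-1).choose ((m-1)/2) : ℕ) : ℝ) * (1/3)^m

private lemma central_halving (t : ℕ) : 2 * ((2*t+1).choose t) = (2*t+2).choose (t+1) := by
  have h1 : (2*t+2).choose (t+1) = (2*t+1).choose t + (2*t+1).choose (t+1) :=
    Nat.choose_succ_succ' (2*t+1) t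
  have h2 : (2*t+1).choose (t+1) = (2*t+1).choose t := by
    have := Nat.choose_symm_add (a := t) (b := t+1)
    rw [show t + (t+1) = 2*t+1 by omega] at this
    omega
  omega

private lemma hasSum_vfun : HasSum vfun (3*Real.sqrt 5/5) := by
  have heven : HasSum (fun s => vfun (2*s)) (6*Real.sqrt 5/25) := by
    have hfe : (fun s => vfun (2*s))
        = fun s : ℕ => (s : ℝ) * (((2*s).choose s : ℕ) : ℝ) * (1/9)^s := by
      funext s
      cases s with
      | zero => simp [vfun]
      | succ t =>
        have h1 : 2*(t+1) - 1 = 2*t+1 := by omega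
        have h2 : (2*t+1)/2 = t := by omega
        have h3 := central_halving t
        simp only [vfun, h1, h2]
        rw [show 2*(t+1) = 2*t+2 by omega] at *
        rw [← h3]
        push_cast
        rw [show (2*t+2 : ℕ) = 2*(t+1) by omega, pow_mul]
        norm_num
        ring
    rw [hfe]; exact hasSum_dR
  have hodd : HasSum (fun s => vfun (2*s+1)) (9*Real.sqrt 5/25) := by
    have hfe : (fun s => vfun (2*s+1))
        = fun s : ℕ => (2*(s:ℝ)+1) * (((2*s).choose s : ℕ) : ℝ) * (1/9)^s * (1/3) := by
      funext s
      have h1 : 2*s+1-1 = 2*s := by omega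
      have h2 : (2*s)/2 = s := by omega
      simp only [vfun, h1, h2]
      rw [pow_succ, pow_mul]
      push_cast
      norm_num
      ring
    rw [hfe]
    have h := ((hasSum_dR.mul_left 2).add hasSum_cbR).mul_right (1/3)
    have : (fun n : ℕ => (2 * ((n:ℝ) * (((2*n).choose n : ℕ) : ℝ) * (1/9)^n)
        + (((2*n).choose n : ℕ) : ℝ) * (1/9)^n) * (1/3))
        = fun s : ℕ => (2*(s:ℝ)+1) * (((2*s).choose s : ℕ) : ℝ) * (1/9)^s * (1/3) := by
      funext n; ring
    rw [this] at h
    convert h using 1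
    · rfl
    ring
  have := heven.even_add_odd hodd
  convert this using 1
  ring





private noncomputable def Gfun (p : ℕ × ℕ) : ℝ :=
  ((p.1:ℝ)+1) * (((p.1+p.2).choose p.2 : ℕ) : ℝ) * (1/3)^(p.1+p.2)
private noncomputable def Ffun (p : ℕ × ℕ) : ℝ := if p.2 < p.1 then Gfun p else 0
private noncomputable def F2fun (p : ℕ × ℕ) : ℝ := if p.1 < p.2 then Gfun p else 0
private noncomputable def Dgfun (p : ℕ × ℕ) : ℝ := if p.1 = p.2 then Gfun p else 0
private noncomputable def F'fun (p : ℕ × ℕ) : ℝ :=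
  if p.2 < p.1 then ((p.2:ℝ)+1) * (((p.1+p.2).choose p.2 : ℕ) : ℝ) * (1/3)^(p.1+p.2) else 0

private lemma Gfun_nonneg (p : ℕ × ℕ) : 0 ≤ Gfun p := by
  unfold Gfun; positivity

private lemma pow_third_identity (n : ℕ) :
    (1/3:ℝ)^n * (1/(1-1/3)^(n+1)) = 3/2 * (1/2)^n := by
  rw [show ((1:ℝ)-1/3) = 2/3 by norm_num]
  have h1 : (1/((2/3:ℝ))^(n+1)) = (3/2:ℝ)^(n+1) := by
    rw [one_div, ← inv_pow]; norm_num
  rw [h1, pow_succ]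
  have h2 : (1/3:ℝ)^n * (3/2:ℝ)^n = (1/2:ℝ)^n := by
    rw [← mul_pow]; norm_num
  calc (1/3:ℝ)^n * ((3/2:ℝ)^n * (3/2)) = ((1/3:ℝ)^n * (3/2:ℝ)^n) * (3/2) := by ring
    _ = (1/2:ℝ)^n * (3/2) := by rw [h2]
    _ = 3/2 * (1/2)^n := by ring

private lemma hasSum_Grow (n : ℕ) :
    HasSum (fun k => Gfun (n, k)) (3/2 * ((n:ℝ)+1) * (1/2)^n) := by
  have h := (hasSum_choose_mul_geometric_of_norm_lt_one (𝕜 := ℝ) n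
    (r := 1/3) (by rw [Real.norm_eq_abs, abs_of_nonneg (by norm_num : (0:ℝ) ≤ 1/3)]; norm_num)).mul_left (((n:ℝ)+1) * (1/3)^n)
  have hfe : (fun k => (((n:ℝ)+1) * (1/3)^n) * ((((k+n).choose n : ℕ) : ℝ) * (1/3)^k))
      = fun k => Gfun (n, k) := by
    funext k
    unfold Gfun
    rw [show (n+k).choose k = (k+n).choose n by rw [Nat.add_comm]; exact Nat.choose_symm_add]
    rw [pow_add]
    ring
  have hval : (((n:ℝ)+1) * (1/3)^n) * (1/(1-1/3)^(n+1)) = 3/2 * ((n:ℝ)+1) * (1/2)^n := by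
    have := pow_third_identity n
    nlinarith [this]
  rw [hfe, hval] at h
  exact h
private lemma hasSum_outer :
    HasSum (fun n : ℕ => 3/2 * ((n:ℝ)+1) * (1/2)^n) 6 := by
  have h := (hasSum_choose_mul_geometric_of_norm_lt_one (𝕜 := ℝ) 1
    (r := 1/2) (by rw [Real.norm_eq_abs, abs_of_nonneg (by norm_num : (0:ℝ) ≤ 1/2)]; norm_num)).mul_left (3/2)
  have hfe : (fun n : ℕ => (3/2:ℝ) * (((n+1).choose 1 : ℕ) * (1/2)^n))
      = fun n : ℕ => 3/2 * ((n:ℝ)+1) * (1/2)^n := by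
    funext n
    rw [Nat.choose_one_right]
    push_cast
    ring
  rw [hfe] at h
  convert h using 1
  · rfl
  norm_num

private lemma summable_Gfun : Summable Gfun := by
  rw [summable_prod_of_nonneg Gfun_nonneg]
  constructor
  · intro n; exact (hasSum_Grow n).summable
  · apply hasSum_outer.summable.congr
    intro n
    exact ((hasSum_Grow n).tsum_eq).symm

private lemma hasSum_Gfun : HasSum Gfun 6 := by
  have h := summable_Gfun.hasSum
  have hfib := h.prod_fiberwise (fun n => hasSum_Grow n)
  rwa [← hasSum_outer.unique hfib] at h

private lemma summable_of_le_Gfun (f : ℕ × ℕ → ℝ) (h0 : ∀ p, 0 ≤ f p) (h1 : ∀ p, f p ≤ Gfun p) :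
    Summable f :=
  Summable.of_nonneg_of_le h0 h1 summable_Gfun.hasSum.summable

private lemma Ffun_nonneg (p : ℕ × ℕ) : 0 ≤ Ffun p := by
  unfold Ffun; split_ifs; exacts [Gfun_nonneg p, le_refl 0]
private lemma F2fun_nonneg (p : ℕ × ℕ) : 0 ≤ F2fun p := by
  unfold F2fun; split_ifs; exacts [Gfun_nonneg p, le_refl 0]
private lemma Dgfun_nonneg (p : ℕ × ℕ) : 0 ≤ Dgfun p := by
  unfold Dgfun; split_ifs; exacts [Gfun_nonneg p, le_refl 0]

private lemma summable_Ffun : Summable Ffun := by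
  refine summable_of_le_Gfun _ Ffun_nonneg fun p => ?_
  unfold Ffun; split_ifs; exacts [le_refl _, Gfun_nonneg p]
private lemma summable_F2fun : Summable F2fun := by
  refine summable_of_le_Gfun _ F2fun_nonneg fun p => ?_
  unfold F2fun; split_ifs; exacts [le_refl _, Gfun_nonneg p]
private lemma summable_Dgfun : Summable Dgfun := by
  refine summable_of_le_Gfun _ Dgfun_nonneg fun p => ?_
  unfold Dgfun; split_ifs; exacts [le_refl _, Gfun_nonneg p]

private lemma hasSum_np1 :
    HasSum (fun n : ℕ => ((n:ℝ)+1) * (((2*n).choose n : ℕ) : ℝ) * (1/9)^n)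
      (21*Real.sqrt 5/25) := by
  have h := hasSum_dR.add hasSum_cbR
  have hfe : (fun n : ℕ => (n : ℝ) * (((2*n).choose n : ℕ) : ℝ) * (1/9)^n
      + (((2*n).choose n : ℕ) : ℝ) * (1/9)^n)
      = fun n : ℕ => ((n:ℝ)+1) * (((2*n).choose n : ℕ) : ℝ) * (1/9)^n := by
    funext n; ring
  rw [hfe] at h
  convert h using 1
  ring

private lemma hasSum_Dgfun : HasSum Dgfun (21*Real.sqrt 5/25) := by
  have hinj : Function.Injective (fun n : ℕ => ((n, n) : ℕ × ℕ)) := by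
    intro a b h; simpa using congrArg Prod.fst h
  rw [← hinj.hasSum_iff (f := Dgfun) (a := 21*Real.sqrt 5/25) ?_]
  · have hfe : (Dgfun ∘ fun n : ℕ => ((n, n) : ℕ × ℕ))
        = fun n : ℕ => ((n:ℝ)+1) * (((2*n).choose n : ℕ) : ℝ) * (1/9)^n := by
      funext n
      simp only [Function.comp, Dgfun, Gfun, if_pos rfl]
      rw [show n + n = 2*n by omega, pow_mul]
      norm_num
    rw [hfe]
    exact hasSum_np1
  · rintro ⟨a, b⟩ hp
    unfold Dgfun
    rw [if_neg]
    intro h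
    simp only at h
    exact hp ⟨a, by simp [h]⟩

private lemma hasSum_F'fun_iff {a : ℝ} : HasSum F'fun a ↔ HasSum F2fun a := by
  rw [← (Equiv.prodComm ℕ ℕ).hasSum_iff (f := F2fun)]
  have hfe : F2fun ∘ (Equiv.prodComm ℕ ℕ) = F'fun := by
    funext p
    rcases p with ⟨n, k⟩
    simp only [Function.comp, Equiv.prodComm_apply, Prod.swap, F2fun, F'fun]
    split_ifs with h
    · unfold Gfun
      simp only
      rw [show (k+n).choose n = (n+k).choose k by rw [Nat.add_comm]; exact Nat.choose_symm_add,
        Nat.add_comm k n]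
      simp [h]
    · simp [h]
  rw [hfe]

-- fiber sums of Ffun - F'fun over antidiagonals
private lemma fiber_sum_eq (m : ℕ) :
    ∑ p ∈ Finset.HasAntidiagonal.antidiagonal m, (Ffun p - F'fun p) = vfun m := by
  rw [Finset.Nat.sum_antidiagonal_eq_sum_range_succ_mk, ← Finset.sum_range_reflect]
  have hterm : ∀ j ∈ range (m+1),
      (Ffun (m+1-1-j, m-(m+1-1-j)) - F'fun (m+1-1-j, m-(m+1-1-j)))
        = if 2*j < m then ((m:ℝ) - 2*j) * ((m.choose j : ℕ) : ℝ) * (1/3)^m else 0 := by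
    intro j hj
    rw [mem_range] at hj
    have hj' : j ≤ m := by omega
    have e1 : m+1-1-j = m-j := by omega
    have e2 : m-(m-j) = j := by omega
    have e3 : (m-j) + j = m := by omega
    rw [e1, e2]
    simp only [Ffun, F'fun, Gfun, e3]
    by_cases h : j < m - j
    · rw [if_pos h, if_pos h, if_pos (show 2*j < m by omega), Nat.cast_sub hj']
      ring
    · rw [if_neg h, if_neg h, if_neg (show ¬ 2*j < m by omega)]
      ring
  rw [sum_congr rfl hterm]
  -- now evaluate the guarded sum
  rcases Nat.eq_zero_or_pos m with hm | hm
  · subst hm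
    unfold vfun
    simp
  · obtain ⟨M, rfl⟩ : ∃ M, m = M + 1 := ⟨m - 1, by omega⟩
    set t := M / 2 with htdef
    have hsub : range (t+1) ⊆ range (M+1+1) := by
      apply range_subset_range.2; omega
    rw [← Finset.sum_subset hsub (fun x hx hnx => ?_)]
    · have : ∀ j ∈ range (t+1),
          (if 2*j < M+1 then (((M+1:ℕ):ℝ) - 2*j) * (((M+1).choose j : ℕ) : ℝ) * (1/3)^(M+1) else 0)
            = ((((M:ℝ)+1) - 2*j) * (((M+1).choose j : ℕ) : ℝ)) * (1/3)^(M+1) := by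
        intro j hjr
        rw [mem_range] at hjr
        rw [if_pos (by omega)]
        push_cast
        ring
      rw [sum_congr rfl this, ← sum_mul, tel M t (by omega)]
      unfold vfun
      have e5 : M + 1 - 1 = M := by omega
      rw [e5]
      push_cast
      ring
    · rw [mem_range] at hx hnx
      rw [if_neg (by omega)]

private lemma TF_val : ∑' p, Ffun p = 3 - 3*Real.sqrt 5/25 := by
  set TF := ∑' p, Ffun p with hTFdef
  set TF2 := ∑' p, F2fun p with hTF2def
  have hF : HasSum Ffun TF := summable_Ffun.hasSum
  have hF2 : HasSum F2fun TF2 := summable_F2fun.hasSum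
  have hF' : HasSum F'fun TF2 := hasSum_F'fun_iff.2 hF2
  have hW : HasSum (fun p => Ffun p - F'fun p) (TF - TF2) := hF.sub hF'
  have hWs := ((Finset.HasAntidiagonal.sigmaAntidiagonalEquivProd (A := ℕ)).hasSum_iff
    (f := fun p => Ffun p - F'fun p)).2 hW
  have hfib : HasSum (fun m => ∑ p ∈ Finset.HasAntidiagonal.antidiagonal m, (Ffun p - F'fun p)) (TF - TF2) := by
    refine HasSum.sigma hWs (fun m => ?_)
    rw [← Finset.sum_finset_coe]
    exact hasSum_fintype _
  have hv : HasSum (fun m => ∑ p ∈ Finset.HasAntidiagonal.antidiagonal m, (Ffun p - F'fun p))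
      (3*Real.sqrt 5/5) := by
    simp only [fiber_sum_eq]
    exact hasSum_vfun
  have heq1 : TF - TF2 = 3*Real.sqrt 5/5 := hfib.unique hv
  have hGs : (fun p => Ffun p + F2fun p + Dgfun p) = Gfun := by
    funext p
    simp only [Ffun, F2fun, Dgfun]
    rcases lt_trichotomy p.1 p.2 with h | h | h
    · rw [if_neg (by omega), if_pos h, if_neg (by omega)]; ring
    · rw [if_neg (by omega), if_neg (by omega), if_pos h]; ring
    · rw [if_pos h, if_neg (by omega), if_neg (by omega)]; ring
  have hsum3 : HasSum Gfun (TF + TF2 + 21*Real.sqrt 5/25) := by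
    rw [← hGs]
    exact (hF.add hF2).add hasSum_Dgfun
  have heq2 : TF + TF2 + 21*Real.sqrt 5/25 = 6 := hsum3.unique hasSum_Gfun
  linarith

private lemma hasSum_A :
    HasSum (fun n : ℕ => ((n:ℝ)+1)
        * ∑ k ∈ range n, (((n+k).choose k : ℕ) : ℝ) * (1/3)^(n+k))
      (3 - 3*Real.sqrt 5/25) := by
  have hF : HasSum Ffun (3 - 3*Real.sqrt 5/25) := by
    rw [← TF_val]; exact summable_Ffun.hasSum
  refine hF.prod_fiberwise (fun n => ?_)
  have h := hasSum_sum_of_ne_finset_zero (L := SummationFilter.unconditional ℕ) (f := fun k => Ffun (n, k)) (s := range n)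
    (fun k hk => by
      rw [mem_range] at hk
      simp only [Ffun]
      rw [if_neg (by simpa using hk)])
  have : ∑ k ∈ range n, Ffun (n, k)
      = ((n:ℝ)+1) * ∑ k ∈ range n, (((n+k).choose k : ℕ) : ℝ) * (1/3)^(n+k) := by
    rw [mul_sum]
    refine sum_congr rfl (fun k hk => ?_)
    rw [mem_range] at hk
    simp only [Ffun, Gfun, if_pos hk]
    ring
  rwa [this] at h

/-- The mean vertical gap `∑_{d≥1} d·q(d)` equals `2 + √5/5`. -/
theorem mean_parking_gap :
    HasSum (fun d : ℕ => ((d + 1 : ℕ) : ℝ) * parkingGap (d + 1)) (2 + Real.sqrt 5 / 5) := by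
  have h1 : HasSum (fun n : ℕ => ((n:ℝ)+1) * (((2*n).choose n : ℕ) : ℝ) * (1/3:ℝ)^(2*n+1))
      (7*Real.sqrt 5/25) := by
    have h := hasSum_np1.mul_right (1/3)
    have hfe : (fun n : ℕ => (((n:ℝ)+1) * (((2*n).choose n : ℕ) : ℝ) * (1/9)^n) * (1/3))
        = fun n : ℕ => ((n:ℝ)+1) * (((2*n).choose n : ℕ) : ℝ) * (1/3:ℝ)^(2*n+1) := by
      funext n
      rw [pow_succ, pow_mul]
      norm_num
      ring
    rw [hfe] at h
    convert h using 1
    · rfl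
    ring
  have h2 := (hasSum_A.mul_left (2/3)).add h1
  have hfe : (fun n : ℕ => (2/3) * (((n:ℝ)+1)
        * ∑ k ∈ range n, (((n+k).choose k : ℕ) : ℝ) * (1/3)^(n+k))
      + ((n:ℝ)+1) * (((2*n).choose n : ℕ) : ℝ) * (1/3:ℝ)^(2*n+1))
      = fun d : ℕ => ((d + 1 : ℕ) : ℝ) * parkingGap (d + 1) := by
    funext d
    unfold parkingGap
    have e1 : d + 1 - 1 = d := by omega
    have e2 : 2 * (d+1) - 2 = 2*d := by omega
    have e3 : 2 * (d+1) - 1 = 2*d+1 := by omega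
    rw [e1, e2, e3]
    push_cast
    ring
  rw [hfe] at h2
  convert h2 using 1
  · rfl
  ring
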